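/- For all integers n−1 ≥ r ≥ 1, the reciprocal polynomial satisfies J̄_n^{(r)}(q) = ∑_{k=1}^{n−r} ∑_{(u_1,…,u_k)} [r]_q^{u_1} [u_1]_q^{u_2} ⋯ [u_{k−1}]_q^{u_k} · q^{σ(u) + r(n−r−u_1)} · (n−r)!/(u_1!⋯u_k!), where the inner sum is over all k-tuples of strictly positive integers (u_1,…,u_k) with u_1+⋯+u_k = n−r, and σ(u) = ∑_{1 ≤ i, i+2 ≤ j ≤ k} u_i u_j. -/

import Mathlib

noncomputable section

/-- `[m]_q = 1 + q + ⋯ + q^{m-1}` as a polynomial in `q` (so `[0]_q = 0`). -/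
def qNat (m : ℕ) : Polynomial ℚ := ∑ i ∈ Finset.range m, Polynomial.X ^ i

/-- The polynomials `J_n^{(r)}(q)`: `J_n^{(0)} = δ_{n,0}`, `J_r^{(r)} = 1` for
`r ≥ 1`, and for `n > r ≥ 1` the recurrence
`J_n^{(r)} = ∑_{j=1}^{n−r} [r]_q^j q^{C(j,2)} C(n−r,j) J_{n−r}^{(j)}`.
(For `n < r` we set the unconstrained value `J_n^{(r)} = 0`.) -/
def J (n r : ℕ) : Polynomial ℚ :=
  if hr : r = 0 then (if n = 0 then 1 else 0)
  else if hn : n ≤ r then (if n = r then 1 else 0)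
  else
    ∑ j ∈ Finset.Icc 1 (n - r),
      qNat r ^ j * Polynomial.X ^ j.choose 2 * ((n - r).choose j : Polynomial ℚ) * J (n - r) j
termination_by n
decreasing_by omega


/-- The reciprocal polynomial `J̄_n^{(r)}(q) = q^{C(n−1,2)−C(r−1,2)} J_n^{(r)}(1/q)`,
i.e. the reflection of `J_n^{(r)}` at degree `C(n−1,2) − C(r−1,2)`. -/
def Jbar (n r : ℕ) : Polynomial ℚ :=
  Polynomial.reflect ((n - 1).choose 2 - (r - 1).choose 2) (J n r)

/-- The compositions of `m` into `k` strictly positive parts `(u_1, …, u_k)`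
(as functions `Fin k → ℕ`, `u i` being `u_{i+1}`). -/
def compositions (k m : ℕ) : Finset (Fin k → ℕ) :=
  (Finset.Nat.antidiagonalTuple k m).filter fun u => ∀ i, 1 ≤ u i

/-- The chain `[r]_q^{u_1} [u_1]_q^{u_2} ⋯ [u_{k−1}]_q^{u_k}`. -/
def chainQ (r k : ℕ) (u : Fin k → ℕ) : Polynomial ℚ :=
  ∏ i : Fin k,
    qNat (if (i : ℕ) = 0 then r
      else u ⟨(i : ℕ) - 1, lt_of_le_of_lt (Nat.sub_le _ _) i.isLt⟩) ^ u i

/-- `σ(u) = ∑_{1 ≤ i, i+2 ≤ j ≤ k} u_i u_j` (with `0`-based indexing of `u`). -/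
def sigmaComp (k : ℕ) (u : Fin k → ℕ) : ℕ :=
  ∑ i : Fin k, ∑ j : Fin k, if (i : ℕ) + 2 ≤ (j : ℕ) then u i * u j else 0

/-- The first part `u_1` of a tuple `u : Fin k → ℕ` (junk value `0` if `k = 0`). -/
def firstPart (k : ℕ) (u : Fin k → ℕ) : ℕ :=
  if h : 0 < k then u ⟨0, h⟩ else 0

/-! ### Auxiliary lemmas -/

section Aux

open Polynomial Finset

lemma qNat_coeff (m j : ℕ) : (qNat m).coeff j = if j < m then 1 else 0 := by
  unfold qNat
  rw [Polynomial.finset_sum_coeff]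
  simp only [Polynomial.coeff_X_pow]
  rw [Finset.sum_ite_eq (Finset.range m) j (fun _ => (1:ℚ))]
  simp [Finset.mem_range]

lemma qNat_ne_zero {m : ℕ} (hm : 1 ≤ m) : qNat m ≠ 0 := by
  intro h
  have h0 := qNat_coeff m 0
  rw [h, Polynomial.coeff_zero, if_pos (by omega)] at h0
  exact one_ne_zero h0.symm

lemma qNat_natDegree {m : ℕ} (hm : 1 ≤ m) : (qNat m).natDegree = m - 1 := by
  apply le_antisymm
  · rw [Polynomial.natDegree_le_iff_coeff_eq_zero]
    intro j hj
    rw [qNat_coeff]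
    simp only [ite_eq_right_iff]
    intro h; omega
  · apply Polynomial.le_natDegree_of_ne_zero
    rw [qNat_coeff, if_pos (by omega)]
    exact one_ne_zero

lemma qNat_reflect {m : ℕ} (hm : 1 ≤ m) : (qNat m).reflect (m - 1) = qNat m := by
  ext j
  rw [Polynomial.coeff_reflect, qNat_coeff, qNat_coeff]
  rcases le_or_gt j (m-1) with h | h
  · rw [Polynomial.revAt_le h]
    simp only [if_pos (by omega : m - 1 - j < m), if_pos (by omega : j < m)]
  · rw [Polynomial.revAt_eq_self_of_lt h]

lemma reflect_prod {ι : Type*} (s : Finset ι) (f : ι → Polynomial ℚ) (d : ι → ℕ)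
    (h0 : ∀ i ∈ s, f i ≠ 0) (hd : ∀ i ∈ s, (f i).natDegree = d i)
    (hrefl : ∀ i ∈ s, (f i).reflect (d i) = f i) :
    (∏ i ∈ s, f i).reflect (∑ i ∈ s, d i) = ∏ i ∈ s, f i := by
  induction s using Finset.cons_induction with
  | empty => simp [Polynomial.reflect_one]
  | cons a s ha ih =>
    have hdeg : (∏ i ∈ s, f i).natDegree = ∑ i ∈ s, d i := by
      rw [Polynomial.natDegree_prod _ _ (fun i hi => h0 i (Finset.mem_cons_of_mem hi))]
      exact Finset.sum_congr rfl (fun i hi => hd i (Finset.mem_cons_of_mem hi))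
    rw [Finset.prod_cons, Finset.sum_cons,
      Polynomial.reflect_mul (f a) _ (le_of_eq (hd a (Finset.mem_cons_self a s))) (le_of_eq hdeg),
      hrefl a (Finset.mem_cons_self a s),
      ih (fun i hi => h0 i (Finset.mem_cons_of_mem hi))
        (fun i hi => hd i (Finset.mem_cons_of_mem hi))
        (fun i hi => hrefl i (Finset.mem_cons_of_mem hi))]

lemma reflect_sum {ι : Type*} (s : Finset ι) (f : ι → Polynomial ℚ) (N : ℕ) :
    (∑ i ∈ s, f i).reflect N = ∑ i ∈ s, (f i).reflect N := by
  induction s using Finset.cons_induction with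
  | empty => simp [Polynomial.reflect_zero]
  | cons a s ha ih => rw [Finset.sum_cons, Finset.sum_cons, Polynomial.reflect_add, ih]

lemma reflect_pow (f : Polynomial ℚ) (d e : ℕ) (h0 : f ≠ 0) (hd : f.natDegree = d)
    (hr : f.reflect d = f) : (f ^ e).reflect (e * d) = f ^ e := by
  have h := reflect_prod (Finset.range e) (fun _ => f) (fun _ => d)
    (fun i _ => h0) (fun i _ => hd) (fun i _ => hr)
  simpa using h

lemma mem_compositions {k m : ℕ} {u : Fin k → ℕ} :
    u ∈ compositions k m ↔ (∑ i, u i) = m ∧ ∀ i, 1 ≤ u i := by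
  simp [compositions, Finset.Nat.mem_antidiagonalTuple]

lemma compositions_eq_empty {k m : ℕ} (h : m < k) : compositions k m = ∅ := by
  ext u
  simp only [mem_compositions, Finset.notMem_empty, iff_false, not_and]
  intro hs hpos
  have : (k:ℕ) ≤ ∑ i, u i := by
    calc (k:ℕ) = ∑ _i : Fin k, 1 := by simp
    _ ≤ ∑ i, u i := Finset.sum_le_sum (fun i _ => hpos i)
  omega

lemma compositions_zero_succ {m : ℕ} (hm : 1 ≤ m) : compositions 0 m = ∅ := by
  ext u
  simp only [mem_compositions, Finset.notMem_empty, iff_false, not_and]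
  intro hs
  simp at hs; omega

lemma compositions_zero_zero : compositions 0 0 = {![]} := by
  ext u
  simp only [mem_compositions, Finset.mem_singleton]
  constructor
  · intro _; exact Subsingleton.elim _ _
  · intro h; exact ⟨by simp, fun i => i.elim0⟩

lemma multinomial_univ_succ {k : ℕ} (u : Fin (k+1) → ℕ) :
    Nat.multinomial Finset.univ u
      = (∑ i, u i).choose (u 0) * Nat.multinomial Finset.univ (Fin.tail u) := by
  have h1 : (∏ i, (u i).factorial) * Nat.multinomial Finset.univ u = (∑ i, u i).factorial :=
    Nat.multinomial_spec _ _
  have h2 : (∏ i, (Fin.tail u i).factorial) * Nat.multinomial Finset.univ (Fin.tail u)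
      = (∑ i, Fin.tail u i).factorial := Nat.multinomial_spec _ _
  have hsum : ∑ i, u i = u 0 + ∑ i, Fin.tail u i := by
    rw [Fin.sum_univ_succ]; rfl
  have hprod : (∏ i, (u i).factorial) = (u 0).factorial * ∏ i, (Fin.tail u i).factorial := by
    rw [Fin.prod_univ_succ]; rfl
  have hpos : 0 < ∏ i, (u i).factorial := Finset.prod_pos (fun i _ => Nat.factorial_pos _)
  apply Nat.eq_of_mul_eq_mul_left hpos
  have hkey : (u 0 + ∑ i, Fin.tail u i).choose (u 0) * ((u 0).factorial
      * (∑ i, Fin.tail u i).factorial) = (u 0 + ∑ i, Fin.tail u i).factorial := by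
    rw [Nat.choose_symm_add]
    have := Nat.add_choose_mul_factorial_mul_factorial (u 0) (∑ i, Fin.tail u i)
    linarith [this]
  rw [h1, hprod, hsum, ← hkey, ← h2]
  ring

lemma cons_castSucc_eq {k : ℕ} (j : ℕ) (v : Fin k → ℕ) (i : Fin k) :
    (Fin.cons j v : Fin (k+1) → ℕ) (Fin.castSucc i)
      = if (i:ℕ) = 0 then j
        else v ⟨(i:ℕ) - 1, lt_of_le_of_lt (Nat.sub_le _ _) i.isLt⟩ := by
  rcases i with ⟨iv, hiv⟩
  cases iv with
  | zero => simp
  | succ n =>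
    have h1 : Fin.castSucc (⟨n+1, hiv⟩ : Fin k) = Fin.succ ⟨n, by omega⟩ := rfl
    rw [h1, Fin.cons_succ, if_neg (by simp)]
    congr 1

lemma chainQ_cons {k : ℕ} (r j : ℕ) (v : Fin k → ℕ) :
    chainQ r (k+1) (Fin.cons j v) = qNat r ^ j * chainQ j k v := by
  unfold chainQ
  rw [Fin.prod_univ_succ]
  refine congrArg₂ (· * ·) (by simp) (Finset.prod_congr rfl fun i _ => ?_)
  rw [if_neg (by simp), Fin.cons_succ]
  refine congrArg₂ (· ^ ·) (congrArg qNat ?_) rfl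
  exact cons_castSucc_eq j v i

lemma sum_compositions_succ {M : Type*} [AddCommMonoid M] (k m : ℕ)
    (g : (Fin (k+1) → ℕ) → M) :
    ∑ u ∈ compositions (k+1) m, g u
      = ∑ j ∈ Finset.Icc 1 m, ∑ v ∈ compositions k (m - j), g (Fin.cons j v) := by
  rw [show (∑ j ∈ Finset.Icc 1 m, ∑ v ∈ compositions k (m - j), g (Fin.cons j v))
      = ∑ p ∈ (Finset.Icc 1 m).sigma (fun j => compositions k (m - j)), g (Fin.cons p.1 p.2)
    from Finset.sum_sigma' _ _ _]
  apply Finset.sum_nbij' (i := fun u => (⟨u 0, Fin.tail u⟩ : Σ _j : ℕ, Fin k → ℕ))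
    (j := fun p => Fin.cons p.1 p.2)
  · intro u hu
    rw [mem_compositions] at hu
    obtain ⟨hsum, hpos⟩ := hu
    have h0le : u 0 ≤ m := hsum ▸ Finset.single_le_sum (fun i _ => Nat.zero_le _) (Finset.mem_univ 0)
    rw [Finset.mem_sigma, Finset.mem_Icc, mem_compositions]
    refine ⟨⟨hpos 0, h0le⟩, ?_, fun i => hpos _⟩
    have h2 : ∑ i, u i = u 0 + ∑ i, Fin.tail u i := by rw [Fin.sum_univ_succ]; rfl
    dsimp only
    omega
  · rintro ⟨j, v⟩ hp
    rw [Finset.mem_sigma, Finset.mem_Icc, mem_compositions] at hp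
    obtain ⟨⟨h1, h2⟩, hsum, hpos⟩ := hp
    dsimp only at h1 h2 hsum hpos ⊢
    rw [mem_compositions]
    constructor
    · rw [Fin.sum_univ_succ, Fin.cons_zero]
      have h3 : ∑ i : Fin k, (Fin.cons j v : Fin (k+1) → ℕ) i.succ = ∑ i, v i := by
        apply Finset.sum_congr rfl; intro i _; rw [Fin.cons_succ]
      rw [h3, hsum]; omega
    · intro i
      refine Fin.cases ?_ ?_ i
      · rw [Fin.cons_zero]; exact h1
      · intro i'; rw [Fin.cons_succ]; exact hpos i'
  · intro u _; exact Fin.cons_self_tail u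
  · rintro ⟨j, v⟩ _; dsimp only; rw [Fin.cons_zero, Fin.tail_cons]
  · intro u _; rw [Fin.cons_self_tail]

/-- degree bookkeeping quantity: the natDegree of `chainQ r k u`. -/
def dchain (r k : ℕ) (u : Fin k → ℕ) : ℕ :=
  ∑ i : Fin k,
    u i * ((if (i : ℕ) = 0 then r
      else u ⟨(i : ℕ) - 1, lt_of_le_of_lt (Nat.sub_le _ _) i.isLt⟩) - 1)

lemma choose2_add (a b : ℕ) : (a + b).choose 2 = a.choose 2 + b.choose 2 + a * b := by
  induction b with
  | zero => simp
  | succ b ih =>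
    have h1 : (a + b + 1).choose 2 = (a+b).choose 1 + (a+b).choose 2 :=
      Nat.choose_succ_succ (a+b) 1
    have h2 : (b + 1).choose 2 = b.choose 1 + b.choose 2 := Nat.choose_succ_succ b 1
    rw [show a + (b+1) = a + b + 1 by omega, h1, h2, Nat.choose_one_right,
      Nat.choose_one_right, ih]
    ring

lemma dchain_cons {k : ℕ} (r j : ℕ) (v : Fin k → ℕ) :
    dchain r (k+1) (Fin.cons j v) = j * (r - 1) + dchain j k v := by
  unfold dchain
  rw [Fin.sum_univ_succ]
  refine congrArg₂ (· + ·) (by simp) (Finset.sum_congr rfl fun i _ => ?_)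
  rw [Fin.cons_succ]
  refine congrArg₂ (· * ·) rfl (congrArg₂ (· - ·) ?_ rfl)
  rw [if_neg (by simp)]
  exact cons_castSucc_eq j v i

lemma sigmaComp_cons {k : ℕ} (j : ℕ) (v : Fin k → ℕ) :
    sigmaComp (k+1) (Fin.cons j v)
      = j * (∑ i : Fin k, if 1 ≤ (i:ℕ) then v i else 0) + sigmaComp k v := by
  unfold sigmaComp
  rw [Fin.sum_univ_succ]
  refine congrArg₂ (· + ·) ?_ ?_
  · rw [Finset.mul_sum, Fin.sum_univ_succ]
    rw [show (if ((0:Fin (k+1)) : ℕ) + 2 ≤ ((0:Fin (k+1)) : ℕ) then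
        (Fin.cons j v : Fin (k+1) → ℕ) 0 * (Fin.cons j v : Fin (k+1) → ℕ) 0 else 0) = 0
      from if_neg (by simp), zero_add]
    apply Finset.sum_congr rfl
    intro t _
    rw [Fin.cons_succ, Fin.cons_zero]
    by_cases h : 1 ≤ (t : ℕ)
    · rw [if_pos (by simp; omega), if_pos h]
    · rw [if_neg (by simp; omega), if_neg h, mul_zero]
  · apply Finset.sum_congr rfl
    intro s _
    rw [Fin.sum_univ_succ]
    rw [show (if ((s.succ : Fin (k+1)) : ℕ) + 2 ≤ ((0:Fin (k+1)) : ℕ) then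
        _ * (Fin.cons j v : Fin (k+1) → ℕ) 0 else 0) = 0 from if_neg (by simp), zero_add]
    apply Finset.sum_congr rfl
    intro t _
    rw [Fin.cons_succ, Fin.cons_succ]
    by_cases h : (s:ℕ) + 2 ≤ (t:ℕ)
    · rw [if_pos (by simp; omega), if_pos h]
    · rw [if_neg (by simp; omega), if_neg h]

lemma sum_ite_firstPart {k : ℕ} (v : Fin k → ℕ) :
    (∑ i : Fin k, if 1 ≤ (i:ℕ) then v i else 0) + firstPart k v = ∑ i, v i := by
  cases k with
  | zero => simp [firstPart]
  | succ k' =>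
    rw [Fin.sum_univ_succ, Fin.sum_univ_succ, if_neg (by simp), zero_add]
    have : firstPart (k'+1) v = v 0 := by simp [firstPart]
    rw [this, add_comm]
    congr 1

lemma key_arith : ∀ (k : ℕ) (u : Fin k → ℕ), (∀ i, 1 ≤ u i) → ∀ r, 1 ≤ r →
    dchain r k u + (∑ i, (u i).choose 2) + sigmaComp k u
      + r * ((∑ i, u i) - firstPart k u) + (r-1).choose 2
    = ((∑ i, u i) + r - 1).choose 2 := by
  intro k
  induction k with
  | zero =>
    intro u _ r hr
    simp [dchain, sigmaComp, firstPart]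
  | succ k IH =>
    intro u hu r hr
    rw [← Fin.cons_self_tail u]
    set j := u 0 with hj
    set v := Fin.tail u with hv
    have hj1 : 1 ≤ j := hu 0
    have hv1 : ∀ i, 1 ≤ v i := fun i => hu i.succ
    set m' := ∑ i, v i with hm'
    have hIH := IH v hv1 j hj1
    set W := ∑ i : Fin k, if 1 ≤ (i:ℕ) then v i else 0 with hW
    have hWfp : W + firstPart k v = m' := sum_ite_firstPart v
    have hfe : firstPart k v ≤ m' := by omega
    have hIH' : dchain j k v + (∑ i, (v i).choose 2) + sigmaComp k v + j * W + (j-1).choose 2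
        = (m' + j - 1).choose 2 := by
      rw [show m' - firstPart k v = W from by omega] at hIH
      exact hIH
    rw [dchain_cons, sigmaComp_cons]
    rw [Fin.sum_univ_succ (f := fun i => ((Fin.cons j v : Fin (k+1) → ℕ) i).choose 2)]
    rw [Fin.sum_univ_succ (f := fun i => (Fin.cons j v : Fin (k+1) → ℕ) i)]
    simp only [Fin.cons_zero, Fin.cons_succ]
    rw [show firstPart (k+1) (Fin.cons j v) = j from by simp [firstPart]]
    rw [show j + (∑ i, v i) - j = m' from by omega]
    obtain ⟨s, rfl⟩ : ∃ s, r = s + 1 := ⟨r - 1, by omega⟩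
    obtain ⟨t, hjt⟩ : ∃ t, j = t + 1 := ⟨j - 1, by omega⟩
    rw [hjt] at hIH' ⊢
    have hchoose_id : (t + 1 + m' + (s+1) - 1).choose 2 + t.choose 2
        = (m' + (t+1) - 1).choose 2 + (t+1) * ((s+1) - 1) + (t+1).choose 2
          + (s+1) * m' + ((s+1)-1).choose 2 := by
      rw [show t + 1 + m' + (s+1) - 1 = (t+1) + (m' + s) from by omega,
        show m' + (t+1) - 1 = m' + t from by omega,
        show (s+1) - 1 = s from by omega]
      rw [choose2_add (t+1) (m'+s), choose2_add m' s, choose2_add m' t, choose2_add t 1,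
        Nat.choose_eq_zero_of_lt (show (1:ℕ) < 2 by omega)]
      ring
    simp only [Nat.add_sub_cancel] at hIH' hchoose_id ⊢
    rw [← hW, ← hm']
    linarith [hIH', hchoose_id]

/-- The summand of the explicit formula for `J`. -/
def Tterm (r k : ℕ) (u : Fin k → ℕ) : Polynomial ℚ :=
  chainQ r k u * Polynomial.X ^ (∑ i, (u i).choose 2)
    * (Nat.multinomial Finset.univ u : Polynomial ℚ)

lemma Tterm_cons {k m : ℕ} (r j : ℕ) (hj1 : 1 ≤ j) (hjm : j ≤ m) (v : Fin k → ℕ)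
    (hv : ∑ i, v i = m - j) :
    Tterm r (k+1) (Fin.cons j v)
      = qNat r ^ j * Polynomial.X ^ (j.choose 2) * (m.choose j : Polynomial ℚ)
        * Tterm j k v := by
  unfold Tterm
  rw [chainQ_cons]
  have hsum : ∑ i : Fin (k+1), (Fin.cons j v : Fin (k+1) → ℕ) i = m := by
    rw [Fin.sum_univ_succ]
    simp only [Fin.cons_zero, Fin.cons_succ]
    rw [hv]; omega
  have hchoose : ∑ i : Fin (k+1), ((Fin.cons j v : Fin (k+1) → ℕ) i).choose 2
      = j.choose 2 + ∑ i, (v i).choose 2 := by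
    rw [Fin.sum_univ_succ]
    simp only [Fin.cons_zero, Fin.cons_succ]
  have hmult : Nat.multinomial Finset.univ (Fin.cons j v : Fin (k+1) → ℕ)
      = m.choose j * Nat.multinomial Finset.univ v := by
    rw [multinomial_univ_succ, Fin.tail_cons, Fin.cons_zero, hsum]
  rw [hchoose, hmult, pow_add]
  push_cast
  ring

lemma J_explicit (m : ℕ) : ∀ r, 1 ≤ r →
    J (m+r) r = ∑ k ∈ Finset.range (m+1), ∑ u ∈ compositions k m, Tterm r k u := by
  induction m using Nat.strong_induction_on with
  | _ m IH =>
    intro r hr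
    rcases Nat.eq_zero_or_pos m with rfl | hm
    · rw [J, dif_neg (by omega), dif_pos (by omega), if_pos (by omega)]
      rw [Finset.sum_range_one, compositions_zero_zero, Finset.sum_singleton]
      unfold Tterm chainQ
      simp [Finset.univ_eq_empty]
    · have hJ : J (m+r) r = ∑ j ∈ Finset.Icc 1 m,
          qNat r ^ j * Polynomial.X ^ j.choose 2 * (m.choose j : Polynomial ℚ) * J m j := by
        rw [J, dif_neg (by omega), dif_neg (by omega)]
        simp only [Nat.add_sub_cancel]
      rw [hJ]
      have hstep : ∀ j ∈ Finset.Icc 1 m, J m j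
          = ∑ k ∈ Finset.range (m - j + 1), ∑ v ∈ compositions k (m-j), Tterm j k v := by
        intro j hj
        rw [Finset.mem_Icc] at hj
        have := IH (m - j) (by omega) j hj.1
        rw [show m - j + j = m from by omega] at this
        exact this
      -- extend inner range to `range m`
      have hstep' : ∀ j ∈ Finset.Icc 1 m, J m j
          = ∑ k ∈ Finset.range m, ∑ v ∈ compositions k (m-j), Tterm j k v := by
        intro j hj
        rw [Finset.mem_Icc] at hj
        rw [hstep j (Finset.mem_Icc.mpr hj)]
        apply Finset.sum_subset
        · intro x hx
          rw [Finset.mem_range] at hx ⊢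
          omega
        · intro x _ hx
          rw [Finset.mem_range] at hx
          rw [compositions_eq_empty (by omega), Finset.sum_empty]
      calc ∑ j ∈ Finset.Icc 1 m,
            qNat r ^ j * Polynomial.X ^ j.choose 2 * (m.choose j : Polynomial ℚ) * J m j
          = ∑ j ∈ Finset.Icc 1 m, ∑ k ∈ Finset.range m, ∑ v ∈ compositions k (m-j),
              qNat r ^ j * Polynomial.X ^ j.choose 2 * (m.choose j : Polynomial ℚ)
                * Tterm j k v := by
            apply Finset.sum_congr rfl
            intro j hj
            rw [hstep' j hj, Finset.mul_sum]
            apply Finset.sum_congr rfl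
            intro k _
            rw [Finset.mul_sum]
        _ = ∑ k ∈ Finset.range m, ∑ j ∈ Finset.Icc 1 m, ∑ v ∈ compositions k (m-j),
              Tterm r (k+1) (Fin.cons j v) := by
            rw [Finset.sum_comm]
            apply Finset.sum_congr rfl
            intro k _
            apply Finset.sum_congr rfl
            intro j hj
            apply Finset.sum_congr rfl
            intro v hv
            rw [Finset.mem_Icc] at hj
            rw [mem_compositions] at hv
            rw [Tterm_cons r j hj.1 hj.2 v hv.1]
        _ = ∑ k ∈ Finset.range m, ∑ u ∈ compositions (k+1) m, Tterm r (k+1) u := by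
            apply Finset.sum_congr rfl
            intro k _
            rw [sum_compositions_succ k m (fun u => Tterm r (k+1) u)]
        _ = ∑ k ∈ Finset.range (m+1), ∑ u ∈ compositions k m, Tterm r k u := by
            rw [Finset.sum_range_succ' (fun k => ∑ u ∈ compositions k m, Tterm r k u) m]
            rw [compositions_zero_succ hm, Finset.sum_empty, add_zero]

lemma chainQ_spec {k : ℕ} (r : ℕ) (u : Fin k → ℕ) (hr : 1 ≤ r) (hu : ∀ i, 1 ≤ u i) :
    chainQ r k u ≠ 0 ∧ (chainQ r k u).natDegree = dchain r k u ∧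
      (chainQ r k u).reflect (dchain r k u) = chainQ r k u := by
  have hbase : ∀ i : Fin k, 1 ≤ (if (i : ℕ) = 0 then r
      else u ⟨(i : ℕ) - 1, lt_of_le_of_lt (Nat.sub_le _ _) i.isLt⟩) := by
    intro i
    by_cases h : (i:ℕ) = 0
    · rw [if_pos h]; exact hr
    · rw [if_neg h]; exact hu _
  have h0 : ∀ i ∈ (Finset.univ : Finset (Fin k)),
      (qNat (if (i : ℕ) = 0 then r
        else u ⟨(i : ℕ) - 1, lt_of_le_of_lt (Nat.sub_le _ _) i.isLt⟩) ^ u i) ≠ 0 :=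
    fun i _ => pow_ne_zero _ (qNat_ne_zero (hbase i))
  have hd : ∀ i ∈ (Finset.univ : Finset (Fin k)),
      (qNat (if (i : ℕ) = 0 then r
        else u ⟨(i : ℕ) - 1, lt_of_le_of_lt (Nat.sub_le _ _) i.isLt⟩) ^ u i).natDegree
      = u i * ((if (i : ℕ) = 0 then r
        else u ⟨(i : ℕ) - 1, lt_of_le_of_lt (Nat.sub_le _ _) i.isLt⟩) - 1) := by
    intro i _
    rw [Polynomial.natDegree_pow, qNat_natDegree (hbase i)]
  have hrefl : ∀ i ∈ (Finset.univ : Finset (Fin k)),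
      (qNat (if (i : ℕ) = 0 then r
        else u ⟨(i : ℕ) - 1, lt_of_le_of_lt (Nat.sub_le _ _) i.isLt⟩) ^ u i).reflect
        (u i * ((if (i : ℕ) = 0 then r
        else u ⟨(i : ℕ) - 1, lt_of_le_of_lt (Nat.sub_le _ _) i.isLt⟩) - 1))
      = qNat (if (i : ℕ) = 0 then r
        else u ⟨(i : ℕ) - 1, lt_of_le_of_lt (Nat.sub_le _ _) i.isLt⟩) ^ u i := by
    intro i _
    exact reflect_pow _ _ _ (qNat_ne_zero (hbase i)) (qNat_natDegree (hbase i))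
      (qNat_reflect (hbase i))
  refine ⟨?_, ?_, ?_⟩
  · unfold chainQ
    exact Finset.prod_ne_zero_iff.mpr h0
  · unfold chainQ dchain
    rw [Polynomial.natDegree_prod _ _ h0]
    exact Finset.sum_congr rfl hd
  · unfold chainQ dchain
    exact reflect_prod _ _ _ h0 hd hrefl

end Aux

/-- for `n − 1 ≥ r ≥ 1`,
`J̄_n^{(r)} = ∑_{k=1}^{n−r} ∑_{(u_1,…,u_k)} [r]_q^{u_1} [u_1]_q^{u_2} ⋯ [u_{k−1}]_q^{u_k}
q^{σ(u) + r(n−r−u_1)} (n−r)!/(u_1!⋯u_k!)`, the inner sum being over the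
compositions of `n − r` into `k` strictly positive parts, and
`σ(u) = ∑_{1 ≤ i, i+2 ≤ j ≤ k} u_i u_j`. -/
theorem Jbar_explicit_formula (n r : ℕ) (hr : 1 ≤ r) (hrn : r + 1 ≤ n) :
    Jbar n r =
      ∑ k ∈ Finset.Icc 1 (n - r), ∑ u ∈ compositions k (n - r),
        chainQ r k u * Polynomial.X ^ (sigmaComp k u + r * (n - r - firstPart k u)) *
          (Nat.multinomial Finset.univ u : Polynomial ℚ) := by
  set m := n - r with hm
  have hm1 : 1 ≤ m := by omega
  have hn : n = m + r := by omega
  unfold Jbar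
  rw [hn, J_explicit m r hr]
  rw [reflect_sum]
  have hIcc : Finset.Icc 1 m ⊆ Finset.range (m+1) := by
    intro x hx
    rw [Finset.mem_Icc] at hx
    rw [Finset.mem_range]
    omega
  rw [← Finset.sum_subset hIcc (by
    intro x hx hx'
    rw [Finset.mem_range] at hx
    rw [Finset.mem_Icc] at hx'
    have : x = 0 := by omega
    subst this
    rw [compositions_zero_succ hm1, Finset.sum_empty, Polynomial.reflect_zero])]
  apply Finset.sum_congr rfl
  intro k hk
  rw [reflect_sum]
  apply Finset.sum_congr rfl
  intro u hu
  rw [mem_compositions] at hu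
  obtain ⟨husum, hupos⟩ := hu
  obtain ⟨hch0, hchd, hchr⟩ := chainQ_spec r u hr hupos
  have hkey := key_arith k u hupos r hr
  rw [husum] at hkey
  set D := (m + r - 1).choose 2 - (r-1).choose 2 with hD
  have hD' : (m + r - 1).choose 2 = D + (r-1).choose 2 := by
    have : (r-1).choose 2 ≤ (m + r - 1).choose 2 := by omega
    omega
  set E := ∑ i, (u i).choose 2 with hE
  set dc := dchain r k u with hdc
  have hsplit : dc + (D - dc) = D := by omega
  have hEle : E ≤ D - dc := by omega
  have hexp : (D - dc) - E = sigmaComp k u + r * (m - firstPart k u) := by omega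
  have hfin : (m + r - 1) = m + r - 1 := rfl
  unfold Tterm
  have hcast : (Nat.multinomial Finset.univ u : Polynomial ℚ)
      = Polynomial.C ((Nat.multinomial Finset.univ u : ℚ)) := by
    rw [Polynomial.C_eq_natCast]
  rw [show chainQ r k u * Polynomial.X ^ E * (Nat.multinomial Finset.univ u : Polynomial ℚ)
      = chainQ r k u * (Polynomial.C ((Nat.multinomial Finset.univ u : ℚ)) * Polynomial.X ^ E)
    from by rw [hcast]; ring]
  rw [← hsplit]
  rw [Polynomial.reflect_mul _ _ (le_of_eq hchd) (le_trans (Polynomial.natDegree_mul_le)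
    (by rw [Polynomial.natDegree_C, Polynomial.natDegree_X_pow]; omega))]
  rw [hchr, Polynomial.reflect_C_mul_X_pow, Polynomial.revAt_le hEle, hexp]
  rw [hcast]
  ring

end
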